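/- Let R = F_{q^a}[X;σ] be a skew polynomial ring over a finite field with σ the q-Frobenius. An element s ∈ R is a left divisor of u·t and a right divisor of t·u for all u ∈ R (i.e., s is a total divisor of t) if and only if s left-divides αX^k·t and right-divides t·αX^k for all α ∈ F_{q^a} and all k < deg s. -/

import Mathlib

noncomputable section

variable {K : Type*} [Field K]

/-- The twisted shift operator `X` (sends `∑ aᵢ Yⁱ` to `∑ σ(aᵢ) Yⁱ⁺¹` on coefficient
sequences), realizing the indeterminate of the skew polynomial ring `K[X;σ]`. -/
def skewX (σ : K →+* K) : AddMonoid.End (ℕ → K) where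
  toFun v n := if n = 0 then 0 else σ (v (n - 1))
  map_zero' := by funext n; simp
  map_add' v w := by
    funext n
    by_cases h : n = 0 <;> simp [h, Pi.add_apply]

/-- Left multiplication by the constant `a`, realizing the embedding of `K`
into the skew polynomial ring `K[X;σ]`. -/
def skewC (a : K) : AddMonoid.End (ℕ → K) where
  toFun v n := a * v n
  map_zero' := by funext n; simp
  map_add' v w := by funext n; simp [Pi.add_apply, mul_add]

/-- The skew polynomial ring `K[X;σ]`, realized concretely as the subring of additive
endomorphisms of `ℕ → K` generated by the constants and the twisted shift. -/
def SkewPolyRing (σ : K →+* K) : Subring (AddMonoid.End (ℕ → K)) :=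
  Subring.closure (Set.range skewC ∪ {skewX σ})

/-- The indeterminate `X` as an element of `K[X;σ]`. -/
def Xel (σ : K →+* K) : SkewPolyRing σ :=
  ⟨skewX σ, Subring.subset_closure (Set.mem_union_right _ rfl)⟩

/-- The constant `a` as an element of `K[X;σ]`. -/
def Cel (σ : K →+* K) (a : K) : SkewPolyRing σ :=
  ⟨skewC a, Subring.subset_closure (Set.mem_union_left _ ⟨a, rfl⟩)⟩

/-- The `i`-th coefficient of a skew polynomial (read off by acting on the
delta sequence at `0`). -/
def coeffS (σ : K →+* K) (p : SkewPolyRing σ) (i : ℕ) : K :=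
  (p : AddMonoid.End (ℕ → K)) (fun n => if n = 0 then 1 else 0) i

/-- The degree of a skew polynomial. -/
def natDegS (σ : K →+* K) (p : SkewPolyRing σ) : ℕ :=
  sSup {i | coeffS σ p i ≠ 0}

/-- A skew polynomial is monic if its leading coefficient is `1`. -/
def MonicS (σ : K →+* K) (p : SkewPolyRing σ) : Prop :=
  coeffS σ p (natDegS σ p) = 1

/-- `s` left-divides `t`. -/
def LDvd (σ : K →+* K) (s t : SkewPolyRing σ) : Prop := ∃ u, t = s * u

/-- `s` right-divides `t`. -/
def RDvd (σ : K →+* K) (s t : SkewPolyRing σ) : Prop := ∃ u, t = u * s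

/-- `s` is a total divisor of `t`: `s` left-divides `u*t` and right-divides `t*u`
for every `u`. -/
def TotalDvd (σ : K →+* K) (s t : SkewPolyRing σ) : Prop :=
  ∀ u, LDvd σ s (u * t) ∧ RDvd σ s (t * u)

/-- `d` is the monic greatest common right divisor of `f` and `g`. -/
def IsGcrd (σ : K →+* K) (d f g : SkewPolyRing σ) : Prop :=
  MonicS σ d ∧ RDvd σ d f ∧ RDvd σ d g ∧ ∀ e, RDvd σ e f → RDvd σ e g → RDvd σ e d

/-- The two-sided ideal `RtR` generated by `t`, as an additive subgroup. -/
def TwoSidedGen (σ : K →+* K) (t : SkewPolyRing σ) : AddSubgroup (SkewPolyRing σ) :=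
  AddSubgroup.closure {x | ∃ r r', x = r * t * r'}


section Aux

variable (σ : K →+* K)

lemma endext {f g : AddMonoid.End (ℕ → K)} (h : ∀ v n, f v n = g v n) : f = g :=
  AddMonoidHom.ext fun v => funext fun n => h v n

variable (σ : K →+* K)

lemma skewX_pow_apply (k : ℕ) (v : ℕ → K) (n : ℕ) :
    ((skewX σ) ^ k) v n = if n < k then 0 else (σ ^ k) ((v (n - k))) := by
  induction k generalizing v n with
  | zero => simp
  | succ k ih =>
    have h1 : ((skewX σ) ^ (k+1)) v n = ((skewX σ)^k) (skewX σ v) n := by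
      rw [pow_succ]; rfl
    rw [h1, ih]
    by_cases h : n < k
    · rw [if_pos h, if_pos (by omega)]
    · rw [if_neg h]
      by_cases h2 : n - k = 0
      · have hz : skewX σ v (n - k) = 0 := by
          show (if n - k = 0 then (0:K) else σ (v (n - k - 1))) = 0
          rw [if_pos h2]
        rw [hz, map_zero, if_pos (by omega : n < k + 1)]
      · have hnk : ¬ n < k + 1 := by omega
        rw [if_neg hnk]
        have hxv : skewX σ v (n - k) = σ (v (n - k - 1)) := by
          show (if n - k = 0 then (0:K) else σ (v (n - k - 1))) = _
          rw [if_neg h2]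
        rw [hxv]
        have : (σ ^ (k+1)) (v (n - (k+1))) = (σ ^ k) (σ (v (n - (k+1)))) := by
          rw [pow_succ]; rfl
        rw [this, Nat.sub_sub]

def Mend (a : K) (i : ℕ) : AddMonoid.End (ℕ → K) := skewC a * (skewX σ) ^ i

lemma Mend_apply (a : K) (i : ℕ) (v : ℕ → K) (n : ℕ) :
    Mend σ a i v n = if n < i then 0 else a * (σ ^ i) (v (n - i)) := by
  show a * (((skewX σ) ^ i) v n) = _
  rw [skewX_pow_apply]
  by_cases h : n < i <;> simp [h]

lemma Mend_mul (a b : K) (i j : ℕ) :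
    Mend σ a i * Mend σ b j = Mend σ (a * (σ ^ i) b) (i + j) := by
  apply endext; intro v n
  have hstep : (Mend σ a i * Mend σ b j) v n = Mend σ a i (Mend σ b j v) n := rfl
  rw [hstep]
  simp only [Mend_apply]
  by_cases h : n < i
  · rw [if_pos h, if_pos (by omega : n < i + j)]
  · rw [if_neg h]
    by_cases h2 : n - i < j
    · rw [if_pos h2, if_pos (by omega : n < i + j), map_zero, mul_zero]
    · rw [if_neg h2, if_neg (by omega : ¬ n < i + j)]
      rw [map_mul, mul_assoc]
      congr 1
      have hcomp : (σ ^ (i+j)) (v (n - (i+j))) = (σ ^ i) ((σ ^ j) (v (n - (i+j)))) := by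
        rw [pow_add]; rfl
      rw [hcomp, ← Nat.sub_sub]

lemma Mend_add (a b : K) (i : ℕ) : Mend σ (a + b) i = Mend σ a i + Mend σ b i := by
  apply endext; intro v n
  show (a + b) * _ = a * _ + b * _
  ring

lemma Mend_zero (i : ℕ) : Mend σ 0 i = 0 := by
  apply endext; intro v n
  show (0:K) * _ = _
  rw [zero_mul]; rfl

lemma Mend_neg (a : K) (i : ℕ) : Mend σ (-a) i = - Mend σ a i := by
  apply endext; intro v n
  show (-a) * _ = _
  rw [neg_mul]; rfl

lemma Mend_one_zero : Mend σ 1 0 = 1 := by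
  apply endext; intro v n
  show (1:K) * ((skewX σ ^ 0) v n) = v n
  rw [pow_zero, one_mul]; rfl

def toEndF (f : ℕ →₀ K) : AddMonoid.End (ℕ → K) := f.sum fun i a => Mend σ a i

def Qrep (x : AddMonoid.End (ℕ → K)) : Prop := ∃ f : ℕ →₀ K, x = toEndF σ f

lemma Q_zero : Qrep σ 0 := ⟨0, by simp [toEndF]⟩

lemma Q_mono (a : K) (i : ℕ) : Qrep σ (Mend σ a i) :=
  ⟨Finsupp.single i a, by rw [toEndF, Finsupp.sum_single_index (Mend_zero σ i)]⟩

lemma Q_add {x y} (hx : Qrep σ x) (hy : Qrep σ y) : Qrep σ (x + y) := by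
  obtain ⟨f, rfl⟩ := hx; obtain ⟨g, rfl⟩ := hy
  exact ⟨f + g, (Finsupp.sum_add_index (fun i _ => Mend_zero σ i)
    (fun i _ a b => Mend_add σ a b i)).symm⟩

lemma Q_neg {x} (hx : Qrep σ x) : Qrep σ (-x) := by
  obtain ⟨f, rfl⟩ := hx
  refine ⟨-f, ?_⟩
  show -(toEndF σ f) = _
  rw [toEndF, toEndF, Finsupp.sum_neg_index (fun i => Mend_zero σ i)]
  rw [show (fun i a => Mend σ (-a) i) = (fun i (a:K) => -(Mend σ a i)) from
    funext fun i => funext fun a => Mend_neg σ a i]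
  rw [Finsupp.sum, ← Finset.sum_neg_distrib]
  rfl

lemma Q_sum {ι : Type*} (s : Finset ι) (F : ι → AddMonoid.End (ℕ → K))
    (h : ∀ i ∈ s, Qrep σ (F i)) : Qrep σ (∑ i ∈ s, F i) :=
  Finset.sum_induction F (Qrep σ) (fun _ _ => Q_add σ) (Q_zero σ) h

lemma Q_mul {x y} (hx : Qrep σ x) (hy : Qrep σ y) : Qrep σ (x * y) := by
  obtain ⟨f, rfl⟩ := hx; obtain ⟨g, rfl⟩ := hy
  rw [toEndF, toEndF, Finsupp.sum, Finsupp.sum, Finset.sum_mul]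
  apply Q_sum
  intro i _
  rw [Finset.mul_sum]
  apply Q_sum
  intro j _
  rw [Mend_mul]
  exact Q_mono σ _ _

lemma Q_one : Qrep σ 1 := by rw [← Mend_one_zero]; exact Q_mono σ 1 0

def Qsub : Subring (AddMonoid.End (ℕ → K)) where
  carrier := {x | Qrep σ x}
  zero_mem' := Q_zero σ
  one_mem' := Q_one σ
  add_mem' := Q_add σ
  neg_mem' := Q_neg σ
  mul_mem' := Q_mul σ

lemma skewC_eq_Mend (a : K) : skewC a = Mend σ a 0 := by
  apply endext; intro v n
  rw [Mend_apply]
  show a * v n = _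
  simp

lemma skewX_eq_Mend : skewX σ = Mend σ 1 1 := by
  apply endext; intro v n
  show skewX σ v n = (skewC 1) ((skewX σ ^ 1) v) n
  rw [pow_one]
  show skewX σ v n = 1 * skewX σ v n
  rw [one_mul]

lemma mem_Qsub (p : SkewPolyRing σ) : Qrep σ (p : AddMonoid.End (ℕ → K)) := by
  have h : SkewPolyRing σ ≤ Qsub σ := by
    rw [SkewPolyRing]
    apply Subring.closure_le.mpr
    rintro x (⟨a, rfl⟩ | rfl)
    · rw [skewC_eq_Mend σ a]; exact Q_mono σ a 0
    · rw [skewX_eq_Mend σ]; exact Q_mono σ 1 1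
  exact h p.2

def deltaSeq : ℕ → K := fun n => if n = 0 then 1 else 0

lemma Mend_delta (a : K) (i j : ℕ) : Mend σ a i (deltaSeq) j = if j = i then a else 0 := by
  rw [Mend_apply]
  by_cases h : j < i
  · rw [if_pos h, if_neg (by omega : ¬ j = i)]
  · rw [if_neg h]
    by_cases h2 : j = i
    · rw [if_pos h2]
      have : deltaSeq (K := K) (j - i) = 1 := by
        rw [deltaSeq, if_pos (by omega : j - i = 0)]
      rw [this, map_one, mul_one]
    · rw [if_neg h2]
      have : deltaSeq (K := K) (j - i) = 0 := by
        rw [deltaSeq, if_neg (by omega : ¬ j - i = 0)]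
      rw [this, map_zero, mul_zero]

def mono (a : K) (i : ℕ) : SkewPolyRing σ := Cel σ a * Xel σ ^ i

lemma mono_coe (a : K) (i : ℕ) : ((mono σ a i : SkewPolyRing σ) : AddMonoid.End (ℕ → K)) = Mend σ a i := by
  rw [mono, Mend, MulMemClass.coe_mul, SubmonoidClass.coe_pow]
  rfl

lemma coeffS_def (p : SkewPolyRing σ) (i : ℕ) :
    coeffS σ p i = (p : AddMonoid.End (ℕ → K)) deltaSeq i := rfl

lemma coeffS_mono (a : K) (i j : ℕ) : coeffS σ (mono σ a i) j = if j = i then a else 0 := by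
  rw [coeffS_def, mono_coe, Mend_delta]

lemma coeffS_sum {ι : Type*} (s : Finset ι) (F : ι → SkewPolyRing σ) (j : ℕ) :
    coeffS σ (∑ i ∈ s, F i) j = ∑ i ∈ s, coeffS σ (F i) j := by
  rw [coeffS_def]
  have h1 : ((∑ i ∈ s, F i : SkewPolyRing σ) : AddMonoid.End (ℕ → K))
      = ∑ i ∈ s, ((F i : SkewPolyRing σ) : AddMonoid.End (ℕ → K)) :=
    AddSubmonoidClass.coe_finset_sum F s
  rw [h1]
  erw [AddMonoidHom.finset_sum_apply, Finset.sum_apply]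
  rfl

lemma coe_injective : Function.Injective
    (fun p : SkewPolyRing σ => (p : AddMonoid.End (ℕ → K))) :=
  Subtype.coe_injective

lemma toEndF_delta (f : ℕ →₀ K) (j : ℕ) : (toEndF σ f) deltaSeq j = f j := by
  rw [toEndF, Finsupp.sum]
  erw [AddMonoidHom.finset_sum_apply, Finset.sum_apply]
  show ∑ c ∈ f.support, Mend σ (f c) c deltaSeq j = f j
  have : ∀ i ∈ f.support, Mend σ (f i) i deltaSeq j = if j = i then f i else 0 :=
    fun i _ => Mend_delta σ (f i) i j
  rw [Finset.sum_congr rfl this, Finset.sum_ite_eq]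
  by_cases h : j ∈ f.support
  · rw [if_pos h]
  · rw [if_neg h, Finsupp.notMem_support_iff.mp h]

/-- canonical representation -/
lemma repr_spec (p : SkewPolyRing σ) :
    ∃ N : ℕ, (∀ i, N ≤ i → coeffS σ p i = 0) ∧
      p = ∑ i ∈ Finset.range N, mono σ (coeffS σ p i) i := by
  obtain ⟨f, hf⟩ := mem_Qsub σ p
  have hcoeff : ∀ i, coeffS σ p i = f i := by
    intro i
    rw [coeffS_def, hf, toEndF_delta]
  set N := f.support.sup id + 1 with hN
  have hsub : f.support ⊆ Finset.range N := by
    intro i hi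
    rw [Finset.mem_range, hN]
    exact Nat.lt_succ_of_le (Finset.le_sup (f := id) hi)
  refine ⟨N, ?_, ?_⟩
  · intro i hi
    rw [hcoeff]
    apply Finsupp.notMem_support_iff.mp
    intro hmem
    exact absurd (Finset.mem_range.mp (hsub hmem)) (by omega)
  · apply Subtype.coe_injective
    show (p : AddMonoid.End (ℕ → K)) = ((∑ i ∈ Finset.range N, mono σ (coeffS σ p i) i : SkewPolyRing σ) : AddMonoid.End (ℕ → K))
    have hR : ((∑ i ∈ Finset.range N, mono σ (coeffS σ p i) i : SkewPolyRing σ)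
        : AddMonoid.End (ℕ → K)) = ∑ i ∈ Finset.range N, Mend σ (f i) i := by
      rw [AddSubmonoidClass.coe_finset_sum]
      apply Finset.sum_congr rfl
      intro i _
      rw [mono_coe, hcoeff]
    rw [hR, hf, toEndF, Finsupp.sum]
    apply Finset.sum_subset hsub
    intro i _ hi
    rw [Finsupp.notMem_support_iff.mp hi, Mend_zero]

lemma mono_zero (i : ℕ) : mono σ 0 i = 0 := by
  apply Subtype.coe_injective
  show ((mono σ 0 i : SkewPolyRing σ) : AddMonoid.End (ℕ → K)) = ((0 : SkewPolyRing σ) : AddMonoid.End (ℕ → K))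
  rw [mono_coe, Mend_zero]
  rfl

lemma mono_mul (a b : K) (i j : ℕ) :
    mono σ a i * mono σ b j = mono σ (a * (σ ^ i) b) (i + j) := by
  apply Subtype.coe_injective
  show ((mono σ a i * mono σ b j : SkewPolyRing σ) : AddMonoid.End (ℕ → K))
      = ((mono σ (a * (σ ^ i) b) (i + j) : SkewPolyRing σ) : AddMonoid.End (ℕ → K))
  rw [MulMemClass.coe_mul, mono_coe, mono_coe, mono_coe, Mend_mul]

lemma eq_zero_of_coeffS (p : SkewPolyRing σ) (h : ∀ i, coeffS σ p i = 0) : p = 0 := by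
  obtain ⟨N, _, hrep⟩ := repr_spec σ p
  rw [hrep]
  apply Finset.sum_eq_zero
  intro i _
  rw [h i, mono_zero]

lemma coeffS_natDeg_ne_zero (p : SkewPolyRing σ) (hp : p ≠ 0) :
    coeffS σ p (natDegS σ p) ≠ 0 := by
  obtain ⟨N, hN, _⟩ := repr_spec σ p
  have hbdd : BddAbove {i | coeffS σ p i ≠ 0} := by
    refine ⟨N, fun i hi => ?_⟩
    by_contra h
    exact hi (hN i (by omega))
  have hne : {i | coeffS σ p i ≠ 0}.Nonempty := by
    by_contra h
    rw [Set.not_nonempty_iff_eq_empty] at h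
    apply hp
    apply eq_zero_of_coeffS
    intro i
    by_contra hc
    have : i ∈ {i | coeffS σ p i ≠ 0} := hc
    rw [h] at this
    exact this
  exact Nat.sSup_mem hne hbdd

lemma coeffS_eq_zero_of_natDeg_lt (p : SkewPolyRing σ) (i : ℕ) (hi : natDegS σ p < i) :
    coeffS σ p i = 0 := by
  obtain ⟨N, hN, _⟩ := repr_spec σ p
  have hbdd : BddAbove {j | coeffS σ p j ≠ 0} := by
    refine ⟨N, fun j hj => ?_⟩
    by_contra h
    exact hj (hN j (by omega))
  by_contra h
  have : i ≤ natDegS σ p := le_csSup hbdd h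
  omega

lemma coeffS_mono_mul (b : K) (k : ℕ) (p : SkewPolyRing σ) (m : ℕ) :
    coeffS σ (mono σ b k * p) m
      = if m < k then 0 else b * (σ ^ k) (coeffS σ p (m - k)) := by
  rw [coeffS_def, MulMemClass.coe_mul, mono_coe]
  show Mend σ b k ((p : AddMonoid.End (ℕ → K)) deltaSeq) m = _
  rw [Mend_apply]
  rfl

lemma coeffS_mul_mono (p : SkewPolyRing σ) (b : K) (k m : ℕ) :
    coeffS σ (p * mono σ b k) m
      = if m < k then 0 else coeffS σ p (m - k) * (σ ^ (m - k)) b := by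
  obtain ⟨N, hN, hrep⟩ := repr_spec σ p
  conv_lhs => rw [hrep]
  rw [Finset.sum_mul]
  have hterm : ∀ i ∈ Finset.range N,
      mono σ (coeffS σ p i) i * mono σ b k = mono σ (coeffS σ p i * (σ ^ i) b) (i + k) :=
    fun i _ => mono_mul σ _ _ _ _
  rw [Finset.sum_congr rfl hterm, coeffS_sum]
  have hterm2 : ∀ i ∈ Finset.range N,
      coeffS σ (mono σ (coeffS σ p i * (σ ^ i) b) (i + k)) m
        = if i = m - k ∧ ¬ m < k then coeffS σ p i * (σ ^ i) b else 0 := by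
    intro i _
    rw [coeffS_mono]
    by_cases h : m = i + k
    · rw [if_pos h, if_pos ⟨by omega, by omega⟩]
    · rw [if_neg h, if_neg (by omega)]
  rw [Finset.sum_congr rfl hterm2]
  by_cases hm : m < k
  · rw [if_pos hm, Finset.sum_eq_zero]
    intro i _
    rw [if_neg (by tauto)]
  · rw [if_neg hm]
    have : ∀ i ∈ Finset.range N,
        (if i = m - k ∧ ¬ m < k then coeffS σ p i * (σ ^ i) b else 0)
          = if i = m - k then coeffS σ p i * (σ ^ i) b else 0 := by
      intro i _
      by_cases h : i = m - k
      · rw [if_pos ⟨h, hm⟩, if_pos h]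
      · rw [if_neg (by tauto), if_neg h]
    rw [Finset.sum_congr rfl this, Finset.sum_ite_eq']
    by_cases h : m - k ∈ Finset.range N
    · rw [if_pos h]
    · rw [if_neg h, hN (m - k) (by simpa using h)]
      rw [zero_mul]

lemma coeffS_sub (p q : SkewPolyRing σ) (i : ℕ) :
    coeffS σ (p - q) i = coeffS σ p i - coeffS σ q i := rfl

lemma pow_injective (N : ℕ) : Function.Injective (σ ^ N : K →+* K) :=
  RingHom.injective _

lemma rdiv (s : SkewPolyRing σ) (hs : s ≠ 0) (u : SkewPolyRing σ) :
    ∃ w r, u = w * s + r ∧ ∀ i, natDegS σ s ≤ i → coeffS σ r i = 0 := by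
  set d := natDegS σ s with hd
  have hc : coeffS σ s d ≠ 0 := coeffS_natDeg_ne_zero σ s hs
  set c := coeffS σ s d with hcc
  have key : ∀ N : ℕ, ∀ u : SkewPolyRing σ, (∀ i, d + N ≤ i → coeffS σ u i = 0) →
      ∃ w r, u = w * s + r ∧ ∀ i, d ≤ i → coeffS σ r i = 0 := by
    intro N
    induction N with
    | zero =>
      intro u hu
      exact ⟨0, u, by rw [zero_mul, zero_add], fun i hi => hu i (by omega)⟩
    | succ N ih =>
      intro u hu
      have hσc : (σ ^ N) c ≠ 0 := fun h => hc (by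
        have := pow_injective σ N (h.trans (map_zero _).symm)
        exact this)
      set b := coeffS σ u (d + N) with hb
      set e := b / ((σ ^ N) c) with he
      set u' := u - mono σ e N * s with hu'
      have hcu' : ∀ i, d + N ≤ i → coeffS σ u' i = 0 := by
        intro i hi
        rw [hu', coeffS_sub, coeffS_mono_mul, if_neg (by omega : ¬ i < N)]
        rcases Nat.lt_or_ge i (d + N + 1) with h1 | h1
        · have hie : i = d + N := by omega
          rw [hie, show d + N - N = d by omega, ← hcc, ← hb, he,
            div_mul_cancel₀ b hσc, sub_self]
        · rw [hu i (by omega), coeffS_eq_zero_of_natDeg_lt σ s (i - N) (by omega),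
            map_zero, mul_zero, sub_zero]
      obtain ⟨w, r, hwr, hr⟩ := ih u' hcu'
      refine ⟨w + mono σ e N, r, ?_, hr⟩
      have h4 : u = u' + mono σ e N * s := by rw [hu', sub_add_cancel]
      rw [h4, hwr, add_mul]
      abel
  obtain ⟨N, hN, _⟩ := repr_spec σ u
  exact key N u (fun i hi => hN i (by omega))

lemma ldiv [Fintype K] (s : SkewPolyRing σ) (hs : s ≠ 0) (u : SkewPolyRing σ) :
    ∃ w r, u = s * w + r ∧ ∀ i, natDegS σ s ≤ i → coeffS σ r i = 0 := by
  set d := natDegS σ s with hd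
  have hc : coeffS σ s d ≠ 0 := coeffS_natDeg_ne_zero σ s hs
  set c := coeffS σ s d with hcc
  have hsurj : Function.Surjective (σ ^ d : K →+* K) :=
    Finite.injective_iff_surjective.mp (pow_injective σ d)
  have key : ∀ N : ℕ, ∀ u : SkewPolyRing σ, (∀ i, d + N ≤ i → coeffS σ u i = 0) →
      ∃ w r, u = s * w + r ∧ ∀ i, d ≤ i → coeffS σ r i = 0 := by
    intro N
    induction N with
    | zero =>
      intro u hu
      exact ⟨0, u, by rw [mul_zero, zero_add], fun i hi => hu i (by omega)⟩
    | succ N ih =>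
      intro u hu
      set b := coeffS σ u (d + N) with hb
      obtain ⟨e, hee⟩ := hsurj (b / c)
      set u' := u - s * mono σ e N with hu'
      have hcu' : ∀ i, d + N ≤ i → coeffS σ u' i = 0 := by
        intro i hi
        rw [hu', coeffS_sub, coeffS_mul_mono, if_neg (by omega : ¬ i < N)]
        rcases Nat.lt_or_ge i (d + N + 1) with h1 | h1
        · have hie : i = d + N := by omega
          rw [hie, show d + N - N = d by omega, ← hcc, ← hb, hee, mul_comm,
            div_mul_cancel₀ b hc, sub_self]
        · rw [hu i (by omega), coeffS_eq_zero_of_natDeg_lt σ s (i - N) (by omega),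
            zero_mul, sub_zero]
      obtain ⟨w, r, hwr, hr⟩ := ih u' hcu'
      refine ⟨w + mono σ e N, r, ?_, hr⟩
      have h4 : u = u' + s * mono σ e N := by rw [hu', sub_add_cancel]
      rw [h4, hwr, mul_add]
      abel
  obtain ⟨N, hN, _⟩ := repr_spec σ u
  exact key N u (fun i hi => hN i (by omega))

lemma LDvd_zero (s : SkewPolyRing σ) : LDvd σ s 0 := ⟨0, (mul_zero s).symm⟩
lemma LDvd_add {s x y : SkewPolyRing σ} (hx : LDvd σ s x) (hy : LDvd σ s y) :
    LDvd σ s (x + y) := by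
  obtain ⟨u, rfl⟩ := hx; obtain ⟨v, rfl⟩ := hy
  exact ⟨u + v, (mul_add _ _ _).symm⟩
lemma RDvd_zero (s : SkewPolyRing σ) : RDvd σ s 0 := ⟨0, (zero_mul s).symm⟩
lemma RDvd_add {s x y : SkewPolyRing σ} (hx : RDvd σ s x) (hy : RDvd σ s y) :
    RDvd σ s (x + y) := by
  obtain ⟨u, rfl⟩ := hx; obtain ⟨v, rfl⟩ := hy
  exact ⟨u + v, (add_mul _ _ _).symm⟩

lemma low_LDvd (s t r : SkewPolyRing σ)
    (h : ∀ (α : K) (k : ℕ), k < natDegS σ s → LDvd σ s (Cel σ α * Xel σ ^ k * t))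
    (hr : ∀ i, natDegS σ s ≤ i → coeffS σ r i = 0) : LDvd σ s (r * t) := by
  obtain ⟨N, hN, hrep⟩ := repr_spec σ r
  rw [hrep, Finset.sum_mul]
  apply Finset.sum_induction _ (LDvd σ s) (fun _ _ => LDvd_add σ) (LDvd_zero σ s)
  intro i _
  rcases Nat.lt_or_ge i (natDegS σ s) with hi | hi
  · exact h (coeffS σ r i) i hi
  · rw [hr i hi, mono_zero, zero_mul]
    exact LDvd_zero σ s

lemma low_RDvd (s t r : SkewPolyRing σ)
    (h : ∀ (α : K) (k : ℕ), k < natDegS σ s → RDvd σ s (t * (Cel σ α * Xel σ ^ k)))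
    (hr : ∀ i, natDegS σ s ≤ i → coeffS σ r i = 0) : RDvd σ s (t * r) := by
  obtain ⟨N, hN, hrep⟩ := repr_spec σ r
  rw [hrep, Finset.mul_sum]
  apply Finset.sum_induction _ (RDvd σ s) (fun _ _ => RDvd_add σ) (RDvd_zero σ s)
  intro i _
  rcases Nat.lt_or_ge i (natDegS σ s) with hi | hi
  · exact h (coeffS σ r i) i hi
  · rw [hr i hi, mono_zero, mul_zero]
    exact RDvd_zero σ s


end Aux

/-- In `R = K[X;σ]` with `K = F_{q^a}` and `σ` the `q`-Frobenius, a nonzero `s` is a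
total divisor of `t` iff `s` left-divides `αX^k · t` and right-divides `t · αX^k`
for all `α ∈ K` and all `k < deg s`. -/
theorem stmt8 {K : Type*} [Field K] [Fintype K]
    (q a : ℕ) (hq : IsPrimePow q) (hK : Fintype.card K = q ^ a)
    (σ : K →+* K) (hσ : ∀ x : K, σ x = x ^ q)
    (s t : SkewPolyRing σ) (hs : s ≠ 0) :
    TotalDvd σ s t ↔
      ∀ (α : K) (k : ℕ), k < natDegS σ s →
        LDvd σ s (Cel σ α * Xel σ ^ k * t) ∧ RDvd σ s (t * (Cel σ α * Xel σ ^ k)) := by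
  constructor
  · intro h α k _
    exact h (Cel σ α * Xel σ ^ k)
  · intro h u
    constructor
    · obtain ⟨w, r, hu, hr⟩ := ldiv σ s hs u
      obtain ⟨v, hv⟩ := low_LDvd σ s t r (fun α k hk => (h α k hk).1) hr
      exact ⟨w * t + v, by rw [hu, add_mul, hv, mul_add, ← mul_assoc]⟩
    · obtain ⟨w, r, hu, hr⟩ := rdiv σ s hs u
      obtain ⟨v, hv⟩ := low_RDvd σ s t r (fun α k hk => (h α k hk).2) hr
      exact ⟨t * w + v, by rw [hu, mul_add, hv, add_mul, mul_assoc]⟩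

end
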